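/- Suppose positive integers a, b, c, r, s, t satisfy ab + 1 = r^2, ac + 1 = s^2, bc + 1 = t^2, and let d = a + b + c + 2abc + 2rst. Then P(a,b,c,d) = 0, where P(a,b,c,d) = a^2 + b^2 + c^2 + d^2 - 2ab - 2ac - 2ad - 2bc - 2bd - 2cd - 4abcd - 4. -/
import Mathlib


def P (a b c d : ℤ) : ℤ := a^2 + b^2 + c^2 + d^2 - 2*a*b - 2*a*c - 2*a*d - 2*b*c - 2*b*d - 2*c*d - 4*a*b*c*d - 4

theorem stmt_6 (a b c r s t : ℤ) (ha : 0 < a) (hb : 0 < b) (hc : 0 < c)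
    (hr : 0 < r) (hs : 0 < s) (ht : 0 < t)
    (h1 : a*b + 1 = r^2) (h2 : a*c + 1 = s^2) (h3 : b*c + 1 = t^2) :
    P a b c (a + b + c + 2*a*b*c + 2*r*s*t) = 0 := by
  unfold P
  linear_combination (-4*s^2*t^2)*h1 + (-4*(a*b+1)*t^2)*h2 + (-4*(a*b+1)*(a*c+1))*h3
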